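/- Assume Assumption 1 holds. If ⟨C, Ψ_l⟩_𝒮 ≠ 0 for infinitely many l, then with probability 1, ι(Ĉ_n, δ_n) → ∞ as n → ∞. -/
import Mathlib


open MeasureTheory Filter
open scoped RealInnerProductSpace

variable {𝒮 : Type*} [NormedAddCommGroup 𝒮] [InnerProductSpace ℝ 𝒮]

/-- `P_j(S) = ∑_{l=1}^{j} ⟨S, Ψ_l⟩ Ψ_l`, the orthogonal projection of `S` onto
`W_j = span {Ψ_1, …, Ψ_j}` (indices `0, …, j-1` in `0`-indexed notation). -/
noncomputable def basisProj (Ψ : HilbertBasis ℕ ℝ 𝒮) (j : ℕ) (S : 𝒮) : 𝒮 :=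
  ∑ l ∈ Finset.range j, ⟪S, Ψ l⟫ • Ψ l

/-- `W_j = span {Ψ_1, …, Ψ_j}` (i.e. the span of `Ψ 0, …, Ψ (j-1)`). -/
def basisSpan (Ψ : HilbertBasis ℕ ℝ 𝒮) (j : ℕ) : Submodule ℝ 𝒮 :=
  Submodule.span ℝ ((fun l => Ψ l) '' Set.Iio j)

/-- `ι(S, δ) = min {j ≥ 1 : ‖S - P_j(S)‖_𝒮 < δ}`. -/
noncomputable def iotaDim (Ψ : HilbertBasis ℕ ℝ 𝒮) (S : 𝒮) (δ : ℝ) : ℕ :=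
  sInf {j | 1 ≤ j ∧ ‖S - basisProj Ψ j S‖ < δ}

lemma basisProj_sub (Ψ : HilbertBasis ℕ ℝ 𝒮) (j : ℕ) (S T : 𝒮) :
    basisProj Ψ j (S - T) = basisProj Ψ j S - basisProj Ψ j T := by
  simp [basisProj, inner_sub_left, sub_smul, Finset.sum_sub_distrib]

lemma norm_basisProj_le (Ψ : HilbertBasis ℕ ℝ 𝒮) (j : ℕ) (T : 𝒮) :
    ‖basisProj Ψ j T‖ ≤ ‖T‖ := by
  have horth : Orthonormal ℝ (fun l => Ψ l) := Ψ.orthonormal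
  have h1 : ‖basisProj Ψ j T‖ ^ 2 = ∑ l ∈ Finset.range j, ⟪T, Ψ l⟫ ^ 2 := by
    rw [basisProj, ← real_inner_self_eq_norm_sq]
    rw [horth.inner_sum (fun l => ⟪T, Ψ l⟫) (fun l => ⟪T, Ψ l⟫)]
    simp [sq]
  have h2 : ∑ l ∈ Finset.range j, ⟪T, Ψ l⟫ ^ 2 ≤ ‖T‖ ^ 2 := by
    have := horth.sum_inner_products_le (s := Finset.range j) T
    simpa [real_inner_comm, Real.norm_eq_abs, sq_abs] using this
  have h3 : ‖basisProj Ψ j T‖ ^ 2 ≤ ‖T‖ ^ 2 := h1 ▸ h2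
  nlinarith [norm_nonneg (basisProj Ψ j T), norm_nonneg T, h3]

lemma tendsto_basisProj (Ψ : HilbertBasis ℕ ℝ 𝒮) (S : 𝒮) :
    Tendsto (fun j => basisProj Ψ j S) atTop (nhds S) := by
  have h := (Ψ.hasSum_repr S).tendsto_sum_nat
  have heq : ∀ j, ∑ l ∈ Finset.range j, Ψ.repr S l • Ψ l = basisProj Ψ j S := by
    intro j
    refine Finset.sum_congr rfl fun l _ => ?_
    rw [Ψ.repr_apply_apply, real_inner_comm]
  simpa [heq] using h

lemma sub_basisProj_pos (Ψ : HilbertBasis ℕ ℝ 𝒮) (C : 𝒮)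
    (hinf : {l : ℕ | ⟪C, Ψ l⟫ ≠ 0}.Infinite) (j : ℕ) :
    0 < ‖C - basisProj Ψ j C‖ := by
  obtain ⟨l, hl, hjl⟩ := hinf.exists_gt j
  have horth : Orthonormal ℝ (fun l => Ψ l) := Ψ.orthonormal
  have hinner : ⟪C - basisProj Ψ j C, Ψ l⟫ = ⟪C, Ψ l⟫ := by
    rw [inner_sub_left, basisProj]
    have : ⟪∑ k ∈ Finset.range j, ⟪C, Ψ k⟫ • Ψ k, Ψ l⟫ = (0 : ℝ) := by
      rw [sum_inner]
      refine Finset.sum_eq_zero fun k hk => ?_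
      rw [real_inner_smul_left, horth.2 (Nat.ne_of_lt (lt_trans (Finset.mem_range.mp hk) hjl)), mul_zero]
    rw [this, sub_zero]
  have hne : C - basisProj Ψ j C ≠ 0 := by
    intro h
    rw [h, inner_zero_left] at hinner
    exact hl hinner.symm
  exact norm_pos_iff.mpr hne

/-- Under Assumption 1, if `⟨C, Ψ_l⟩ ≠ 0` for infinitely many `l`, then
almost surely `ι(Ĉ_n, δ_n) → ∞` as `n → ∞`. -/
theorem infinite_expansion_iota_tendsto_atTop
    {𝒮 : Type*} [NormedAddCommGroup 𝒮] [InnerProductSpace ℝ 𝒮]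
    {Ω : Type*} [MeasurableSpace Ω] (ℙ : Measure Ω) [IsProbabilityMeasure ℙ]
    [MeasurableSpace 𝒮] [BorelSpace 𝒮]
    (Ψ : HilbertBasis ℕ ℝ 𝒮)
    (Chat : ℕ → Ω → 𝒮) (hChat : ∀ n, Measurable (Chat n))
    (C : 𝒮)
    (R : ℕ → ℝ) (hRpos : ∀ n, 0 < R n) (hRanti : StrictAnti R)
    (hRlim : Tendsto R atTop (nhds 0))
    (hrate : ∀ᵐ ω ∂ℙ, ∀ᶠ n in atTop, ‖Chat n ω - C‖ < R n)
    (ε : ℝ) (hε : 0 < ε) (δ : ℕ → ℝ) (hδ : ∀ n, δ n = (1 + ε) * R n)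
    (hinf : {l : ℕ | ⟪C, Ψ l⟫ ≠ 0}.Infinite) :
    ∀ᵐ ω ∂ℙ, Tendsto (fun n => iotaDim Ψ (Chat n ω) (δ n)) atTop atTop := by
  filter_upwards [hrate] with ω hω
  rw [tendsto_atTop]
  intro J
  -- minimum of residual norms over j ≤ J
  have hne : (Finset.range (J + 1)).Nonempty := Finset.nonempty_range_add_one
  set m : ℝ := (Finset.range (J + 1)).inf' hne (fun j => ‖C - basisProj Ψ j C‖) with hm
  have hmpos : 0 < m := by
    rw [hm, Finset.lt_inf'_iff]
    exact fun j _ => sub_basisProj_pos Ψ C hinf j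
  have hRsmall : ∀ᶠ n in atTop, (3 + ε) * R n < m := by
    have : Tendsto (fun n => (3 + ε) * R n) atTop (nhds 0) := by
      simpa using hRlim.const_mul (3 + ε)
    exact this.eventually_lt_const hmpos
  filter_upwards [hω, hRsmall] with n hn1 hn2
  set S := Chat n ω with hS
  -- the defining set is nonempty
  have hδpos : 0 < δ n := by rw [hδ]; nlinarith [hRpos n]
  have hsetne : {j | 1 ≤ j ∧ ‖S - basisProj Ψ j S‖ < δ n}.Nonempty := by
    have h1 : ∀ᶠ j in atTop, ‖S - basisProj Ψ j S‖ < δ n := by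
      have h0 : Tendsto (fun j => S - basisProj Ψ j S) atTop (nhds (S - S)) :=
        tendsto_const_nhds.sub (tendsto_basisProj Ψ S)
      have h0' : Tendsto (fun j => ‖S - basisProj Ψ j S‖) atTop (nhds 0) := by
        simpa using h0.norm
      simpa using h0'.eventually_lt_const hδpos
    obtain ⟨j, hj1, hj2⟩ := (h1.and (eventually_ge_atTop 1)).exists
    exact ⟨j, hj2, hj1⟩
  have hmem := Nat.sInf_mem hsetne
  set j := sInf {j | 1 ≤ j ∧ ‖S - basisProj Ψ j S‖ < δ n} with hjdef
  obtain ⟨hj1, hj2⟩ := hmem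
  show J ≤ j
  by_contra hlt
  push_neg at hlt
  -- then ‖C - P_j C‖ < (3+ε) R n < m, contradiction with j ≤ J
  have hbound : ‖C - basisProj Ψ j C‖ < (3 + ε) * R n := by
    have hCS : ‖C - S‖ < R n := by
      rw [← norm_neg]; simpa [hS] using hn1
    have hproj : ‖basisProj Ψ j S - basisProj Ψ j C‖ < R n := by
      rw [← basisProj_sub]
      calc ‖basisProj Ψ j (S - C)‖ ≤ ‖S - C‖ := norm_basisProj_le Ψ j _
        _ < R n := hn1
    have : ‖C - basisProj Ψ j C‖ ≤ ‖C - S‖ + ‖S - basisProj Ψ j S‖ +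
        ‖basisProj Ψ j S - basisProj Ψ j C‖ := by
      have := norm_sub_le_norm_sub_add_norm_sub C S (basisProj Ψ j C)
      calc ‖C - basisProj Ψ j C‖ ≤ ‖C - S‖ + ‖S - basisProj Ψ j C‖ :=
            norm_sub_le_norm_sub_add_norm_sub _ _ _
        _ ≤ ‖C - S‖ + (‖S - basisProj Ψ j S‖ + ‖basisProj Ψ j S - basisProj Ψ j C‖) := by
            gcongr; exact norm_sub_le_norm_sub_add_norm_sub _ _ _
        _ = _ := by ring
    have hδn := hδ n
    nlinarith [hj2]
  have hmle : m ≤ ‖C - basisProj Ψ j C‖ := by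
    rw [hm]
    exact Finset.inf'_le _ (Finset.mem_range.mpr (by omega))
  linarith
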